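/- Let F be a field and s ∈ ℕ. The shifted succinct Shpilka–Volkovich generator with parameter k = ⌊log₂ s⌋ is a generator for s-sparse polynomials: for every nonzero F ∈ F[X₁,…,X_N] with at most s monomials (N = 2^n), F(G_{n,⌊log₂ s⌋}(y,z) + 1) ≠ 0. -/

import Mathlib

set_option synthInstance.maxHeartbeats 1000000
set_option maxHeartbeats 1000000
open MvPolynomial

section Restr
variable {F : Type*} [Field F] {σ : Type*} [DecidableEq σ]

/-- Substitute `1` for every variable outside `U`. -/
noncomputable def restr (F : Type*) [Field F] {σ : Type*} [DecidableEq σ] (U : Finset σ) :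
    MvPolynomial σ F →ₐ[F] MvPolynomial σ F :=
  aeval (fun i => if i ∈ U then X i else 1)

lemma restr_X (U : Finset σ) (i : σ) :
    restr F U (X i) = if i ∈ U then X i else 1 := by
  simp [restr]

lemma restr_monomial (U : Finset σ) (m : σ →₀ ℕ) (c : F) :
    restr F U (monomial m c) = monomial (m.filter (· ∈ U)) c := by
  classical
  rw [restr, aeval_monomial, monomial_eq, algebraMap_eq]
  congr 1
  rw [Finsupp.prod, Finsupp.prod, Finsupp.support_filter, Finset.prod_filter]
  refine Finset.prod_congr rfl fun i _ => ?_
  by_cases hi : i ∈ U <;> simp [hi, Finsupp.filter_apply]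

lemma restr_eq_sum (U : Finset σ) (P : MvPolynomial σ F) :
    restr F U P = ∑ m ∈ P.support, monomial (m.filter (· ∈ U)) (coeff m P) := by
  conv_lhs => rw [← P.support_sum_monomial_coeff]
  rw [map_sum]
  exact Finset.sum_congr rfl fun m _ => restr_monomial U m (coeff m P)

lemma coeff_restr_eq_zero {U : Finset σ} {P : MvPolynomial σ F} {j : σ} {d : ℕ}
    (hj : j ∈ U) (hP : ∀ m ∈ P.support, m j = d) {m' : σ →₀ ℕ} (hm' : m' j ≠ d) :
    coeff m' (restr F U P) = 0 := by
  classical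
  rw [restr_eq_sum, coeff_sum]
  refine Finset.sum_eq_zero fun m hm => ?_
  rw [coeff_monomial, if_neg]
  intro he
  apply hm'
  have h1 : (m.filter (· ∈ U)) j = m j := by simp [Finsupp.filter_apply, hj]
  rw [← he, h1, hP m hm]

lemma restr_restr {U'' U : Finset σ} (h : U'' ⊆ U) (P : MvPolynomial σ F) :
    restr F U'' (restr F U P) = restr F U'' P := by
  have : (restr F U'').comp (restr F U) = restr F U'' := by
    apply algHom_ext
    intro i
    simp only [AlgHom.comp_apply, restr_X]
    by_cases hi : i ∈ U
    · rw [if_pos hi, restr_X]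
    · rw [if_neg hi, map_one, if_neg (fun hc => hi (h hc))]
  calc restr F U'' (restr F U P) = ((restr F U'').comp (restr F U)) P := rfl
    _ = restr F U'' P := by rw [this]

lemma lemmaA : ∀ s : ℕ, ∀ P : MvPolynomial σ F, P ≠ 0 → P.support.card ≤ s →
    ∃ U : Finset σ, U.card ≤ Nat.log 2 s ∧ restr F U P ≠ 0 := by
  intro s
  induction s using Nat.strong_induction_on with
  | _ s IH =>
    intro P hP hs
    by_cases h1 : restr F (∅ : Finset σ) P ≠ 0
    · exact ⟨∅, by simp, h1⟩
    push_neg at h1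
    -- support has at least two elements
    classical
    have hcard2 : 1 < P.support.card := by
      by_contra hc
      push_neg at hc
      interval_cases h : P.support.card
      · exact hP (MvPolynomial.support_eq_empty.mp (Finset.card_eq_zero.mp h))
      · obtain ⟨m, hm⟩ := Finset.card_eq_one.mp h
        have : restr F (∅ : Finset σ) P =
            monomial (m.filter (· ∈ (∅ : Finset σ))) (coeff m P) := by
          rw [restr_eq_sum, hm, Finset.sum_singleton]
        rw [this] at h1
        have : coeff m P = 0 := by
          have := congrArg (coeff (m.filter (· ∈ (∅ : Finset σ)))) h1
          simpa [coeff_monomial] using this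
        exact (MvPolynomial.mem_support_iff.mp (by rw [hm]; exact Finset.mem_singleton_self m)) this
    obtain ⟨a, ha, b, hb, hab⟩ := Finset.one_lt_card.mp hcard2
    obtain ⟨j, hj⟩ := Finsupp.ne_iff.mp hab
    set Q : ℕ → MvPolynomial σ F := fun d =>
      ∑ m ∈ P.support.filter (fun m => m j = d), monomial m (coeff m P) with hQ
    have hcoeffQ : ∀ (d : ℕ) (m' : σ →₀ ℕ),
        coeff m' (Q d) = if m' ∈ P.support.filter (fun m => m j = d) then coeff m' P else 0 := by
      intro d m'
      rw [hQ]
      simp only [coeff_sum, coeff_monomial]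
      exact Finset.sum_ite_eq' _ _ _
    have hQsupp : ∀ (d : ℕ) m, m ∈ (Q d).support → m ∈ P.support ∧ m j = d := by
      intro d m hm
      have := MvPolynomial.mem_support_iff.mp hm
      rw [hcoeffQ] at this
      by_cases hmem : m ∈ P.support.filter (fun m => m j = d)
      · simpa using Finset.mem_filter.mp hmem
      · exact absurd (if_neg hmem) this
    have hs2 : 2 ≤ s := le_trans hcard2 hs
    obtain ⟨d, w, hw, hwcard⟩ :
        ∃ d w, (w ∈ P.support ∧ w j = d) ∧
          (P.support.filter (fun m => m j = d)).card ≤ s / 2 := by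
      set fa := P.support.filter (fun m => m j = a j) with hfa
      set fb := P.support.filter (fun m => m j = b j) with hfb
      have hdisj : Disjoint fa fb := by
        rw [Finset.disjoint_left]
        intro m hma hmb
        rw [hfa, Finset.mem_filter] at hma
        rw [hfb, Finset.mem_filter] at hmb
        exact hj (hma.2 ▸ hmb.2 ▸ rfl)
      have hsum : fa.card + fb.card ≤ s := by
        rw [← Finset.card_union_of_disjoint hdisj]
        exact le_trans (Finset.card_le_card (Finset.union_subset
          (Finset.filter_subset _ _) (Finset.filter_subset _ _))) hs
      rcases le_total fa.card fb.card with hle | hle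
      · refine ⟨a j, a, ⟨ha, rfl⟩, ?_⟩
        rw [← hfa]; omega
      · refine ⟨b j, b, ⟨hb, rfl⟩, ?_⟩
        rw [← hfb]; omega
    have hQne : Q d ≠ 0 := by
      intro h0
      have hcw := hcoeffQ d w
      rw [h0] at hcw
      rw [coeff_zero, if_pos (Finset.mem_filter.mpr ⟨hw.1, hw.2⟩)] at hcw
      exact MvPolynomial.mem_support_iff.mp hw.1 hcw.symm
    have hQcard : (Q d).support.card ≤ s / 2 := by
      refine le_trans (Finset.card_le_card ?_) hwcard
      intro m hm
      exact Finset.mem_filter.mpr ⟨(hQsupp d m hm).1, (hQsupp d m hm).2⟩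
    have hhalf : s / 2 < s := Nat.div_lt_self (by omega) (by norm_num)
    obtain ⟨U'', hU''c, hU''⟩ := IH (s / 2) hhalf (Q d) hQne hQcard
    set U := insert j U'' with hU
    have hjU : j ∈ U := Finset.mem_insert_self j U''
    have hrQ : restr F U (Q d) ≠ 0 := by
      intro h0
      exact hU'' (by rw [← restr_restr (Finset.subset_insert j U''), h0, map_zero])
    obtain ⟨m', hm'⟩ := MvPolynomial.ne_zero_iff.mp hrQ
    have hm'j : m' j = d := by
      by_contra hne
      exact hm' (coeff_restr_eq_zero hjU (fun m hm => (hQsupp d m hm).2) hne)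
    have hPsum : ∑ d' ∈ P.support.image (fun m => m j), Q d' = P := by
      rw [hQ]
      rw [Finset.sum_fiberwise_of_maps_to (fun m hm => Finset.mem_image_of_mem _ hm)]
      exact P.support_sum_monomial_coeff
    have hdmem : d ∈ P.support.image (fun m => m j) :=
      Finset.mem_image.mpr ⟨w, hw.1, hw.2⟩
    have hkey : coeff m' (restr F U P) = coeff m' (restr F U (Q d)) := by
      rw [← hPsum, map_sum, coeff_sum]
      refine Finset.sum_eq_single_of_mem d hdmem (fun d' _ hne => ?_)
      exact coeff_restr_eq_zero hjU (fun m hm => (hQsupp d' m hm).2)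
        (by rw [hm'j]; exact fun h => hne h.symm)
    refine ⟨U, ?_, fun h0 => hm' (by rw [← hkey, h0, coeff_zero])⟩
    have hlog : Nat.log 2 (s / 2) + 1 ≤ Nat.log 2 s := by
      have h2 : 0 < Nat.log 2 s := Nat.log_pos (by norm_num) hs2
      have h3 := Nat.log_div_base s 2
      have h4 := Nat.log_div_base 2 s
      omega
    calc U.card ≤ U''.card + 1 := Finset.card_insert_le j U''
      _ ≤ Nat.log 2 (s / 2) + 1 := by omega
      _ ≤ Nat.log 2 s := hlog

end Restr

/-- Multilinear monomial exponent vector of a subset. -/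
noncomputable def mlMon {n : ℕ} (S : Finset (Fin n)) : Fin n →₀ ℕ :=
  ∑ j ∈ S, Finsupp.single j 1

lemma mlMon_apply {n : ℕ} (S : Finset (Fin n)) (j : Fin n) :
    mlMon S j = if j ∈ S then 1 else 0 := by
  classical
  rw [mlMon, Finset.sum_apply']
  simp only [Finsupp.single_apply]
  exact Finset.sum_ite_eq' _ _ _

lemma mlMon_inj {n : ℕ} {S T : Finset (Fin n)} (h : mlMon S = mlMon T) : S = T := by
  ext j
  have hj : mlMon S j = mlMon T j := by rw [h]
  rw [mlMon_apply, mlMon_apply] at hj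
  by_cases hS : j ∈ S <;> by_cases hT : j ∈ T <;> simp [hS, hT] at hj ⊢

lemma prod_X_mlMon {n : ℕ} {R : Type*} [CommSemiring R] (S : Finset (Fin n)) :
    (∏ j ∈ S, (X j : MvPolynomial (Fin n) R)) = monomial (mlMon S) 1 := by
  classical
  induction S using Finset.induction_on with
  | empty => simp [mlMon]
  | insert _ _ hnotmem =>
    rename_i j S hih
    rw [Finset.prod_insert hnotmem, hih, X, monomial_mul, one_mul]
    congr 1
    rw [mlMon, mlMon, Finset.sum_insert hnotmem]
/-- The succinct Shpilka–Volkovich polynomial `Q_{n,k}(y,z,x)`, with genuine variables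
`y_i` and `z_{i,j}` in the coefficient ring `F[y,z]`. -/
noncomputable def svQ (F : Type*) [Field F] (n k : ℕ) :
    MvPolynomial (Fin n) (MvPolynomial (Fin k ⊕ Fin k × Fin n) F) :=
  ∑ i : Fin k, MvPolynomial.C (MvPolynomial.X (Sum.inl i)) *
    ∏ j : Fin n,
      (MvPolynomial.C (MvPolynomial.X (Sum.inr (i, j))) * MvPolynomial.X j +
        MvPolynomial.C (1 - MvPolynomial.X (Sum.inr (i, j))))

/-- The succinct SV generator: the coordinate indexed by a subset `T ⊆ [n]`. -/
noncomputable def svG (F : Type*) [Field F] (n k : ℕ) (T : Finset (Fin n)) :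
    MvPolynomial (Fin k ⊕ Fin k × Fin n) F :=
  (svQ F n k).coeff (mlMon T)

section FactB
variable {F : Type*} [Field F] {n k : ℕ}

/-- The evaluation point for the `y,z` variables: `z_i` is set to the indicator vector of the
`i`-th chosen subset, and `y_i` is set to `X_{T_i} - 1`. -/
noncomputable def chi (F : Type*) [Field F] {n k : ℕ} (U : Finset (Finset (Fin n)))
    (ι : {T // T ∈ U} ↪ Fin k) : Fin k ⊕ Fin k × Fin n → MvPolynomial (Finset (Fin n)) F
  | Sum.inl i => if hx : ∃ t : {T // T ∈ U}, ι t = i then X hx.choose.val - 1 else 0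
  | Sum.inr (i, j) => if hx : ∃ t : {T // T ∈ U}, ι t = i then
      (if j ∈ hx.choose.val then (1 : MvPolynomial (Finset (Fin n)) F) else 0) else 0

noncomputable def chiHom (F : Type*) [Field F] {n k : ℕ} (U : Finset (Finset (Fin n)))
    (ι : {T // T ∈ U} ↪ Fin k) :
    MvPolynomial (Fin k ⊕ Fin k × Fin n) F →+* MvPolynomial (Finset (Fin n)) F :=
  (aeval (chi F U ι) : MvPolynomial (Fin k ⊕ Fin k × Fin n) F →ₐ[F]
    MvPolynomial (Finset (Fin n)) F).toRingHom

lemma chiHom_X (U : Finset (Finset (Fin n))) (ι : {T // T ∈ U} ↪ Fin k)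
    (v : Fin k ⊕ Fin k × Fin n) : chiHom F U ι (X v) = chi F U ι v := by
  show (aeval (chi F U ι) : MvPolynomial (Fin k ⊕ Fin k × Fin n) F →ₐ[F]
    MvPolynomial (Finset (Fin n)) F) (X v) = chi F U ι v
  rw [aeval_X]

lemma map_chi_svQ (U : Finset (Finset (Fin n))) (ι : {T // T ∈ U} ↪ Fin k) :
    MvPolynomial.map (chiHom F U ι) (svQ F n k)
    = ∑ i : Fin k, (if hx : ∃ t : {T // T ∈ U}, ι t = i then
        monomial (mlMon hx.choose.val)
          ((X hx.choose.val : MvPolynomial (Finset (Fin n)) F) - 1) else 0) := by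
  classical
  rw [svQ, map_sum]
  refine Finset.sum_congr rfl fun i _ => ?_
  rw [map_mul, map_C, chiHom_X]
  by_cases hx : ∃ t : {T // T ∈ U}, ι t = i
  · rw [dif_pos hx]
    have hchil : chi F U ι (Sum.inl i) =
        (X hx.choose.val : MvPolynomial (Finset (Fin n)) F) - 1 := dif_pos hx
    rw [hchil, map_prod]
    have h3 : ∀ j : Fin n, MvPolynomial.map (chiHom F U ι)
        (C (X (Sum.inr (i, j))) * X j + C (1 - X (Sum.inr (i, j))))
        = if j ∈ hx.choose.val then (X j : MvPolynomial (Fin n) (MvPolynomial (Finset (Fin n)) F)) else 1 := by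
      intro j
      rw [map_add, map_mul, map_C, map_X, map_C, chiHom_X, map_sub, map_one, chiHom_X]
      have hchir : chi F U ι (Sum.inr (i, j)) =
          if j ∈ hx.choose.val then (1 : MvPolynomial (Finset (Fin n)) F) else 0 := dif_pos hx
      rw [hchir]
      by_cases hj : j ∈ hx.choose.val <;> simp [hj]
    rw [Finset.prod_congr rfl (fun j _ => h3 j), Finset.prod_ite_mem, Finset.univ_inter,
      prod_X_mlMon, C_mul_monomial, mul_one]
  · rw [dif_neg hx]
    have hchil : chi F U ι (Sum.inl i) = 0 := dif_neg hx
    rw [hchil, map_zero, zero_mul]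

lemma aeval_chi_svG (U : Finset (Finset (Fin n))) (ι : {T // T ∈ U} ↪ Fin k)
    (T : Finset (Fin n)) :
    aeval (chi F U ι) (svG F n k T) = if T ∈ U then (X T : MvPolynomial (Finset (Fin n)) F) - 1
      else 0 := by
  classical
  have h0 : aeval (chi F U ι) (svG F n k T)
      = coeff (mlMon T) (MvPolynomial.map (chiHom F U ι) (svQ F n k)) := by
    rw [coeff_map]; rfl
  rw [h0, map_chi_svQ, coeff_sum]
  have hterm : ∀ i : Fin k,
      coeff (mlMon T) (if hx : ∃ t : {T // T ∈ U}, ι t = i then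
        monomial (mlMon hx.choose.val)
          ((X hx.choose.val : MvPolynomial (Finset (Fin n)) F) - 1) else 0)
      = if hx : ∃ t : {T // T ∈ U}, ι t = i then
          (if hx.choose.val = T then (X T : MvPolynomial (Finset (Fin n)) F) - 1 else 0)
        else 0 := by
    intro i
    by_cases hx : ∃ t : {T // T ∈ U}, ι t = i
    · rw [dif_pos hx, dif_pos hx, coeff_monomial]
      by_cases he : hx.choose.val = T
      · rw [if_pos (by rw [he]), if_pos he, he]
      · rw [if_neg (fun hc => he (mlMon_inj hc)), if_neg he]
    · rw [dif_neg hx, dif_neg hx, coeff_zero]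
  rw [Finset.sum_congr rfl (fun i _ => hterm i)]
  by_cases hT : T ∈ U
  · rw [if_pos hT]
    refine Finset.sum_eq_single_of_mem (ι ⟨T, hT⟩) (Finset.mem_univ _) ?_ |>.trans ?_
    · intro i _ hne
      by_cases hx : ∃ t : {T // T ∈ U}, ι t = i
      · rw [dif_pos hx, if_neg]
        intro he
        apply hne
        rw [← hx.choose_spec]
        congr 1
        exact Subtype.ext he
      · rw [dif_neg hx]
    · have hx : ∃ t : {T // T ∈ U}, ι t = ι ⟨T, hT⟩ := ⟨⟨T, hT⟩, rfl⟩
      rw [dif_pos hx, if_pos]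
      have : hx.choose = ⟨T, hT⟩ := ι.injective hx.choose_spec
      rw [this]
  · rw [if_neg hT]
    refine Finset.sum_eq_zero fun i _ => ?_
    by_cases hx : ∃ t : {T // T ∈ U}, ι t = i
    · rw [dif_pos hx, if_neg]
      intro he
      exact hT (he ▸ hx.choose.property)
    · rw [dif_neg hx]

lemma factB (U : Finset (Finset (Fin n))) (hU : U.card ≤ k)
    (P : MvPolynomial (Finset (Fin n)) F) (h : restr F U P ≠ 0) :
    aeval (fun T : Finset (Fin n) => svG F n k T + 1) P ≠ 0 := by
  classical
  obtain ⟨ι⟩ : Nonempty ({T // T ∈ U} ↪ Fin k) := by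
    rw [Function.Embedding.nonempty_iff_card_le, Fintype.card_coe, Fintype.card_fin]
    exact hU
  have hcomp : (aeval (chi F U ι)).comp
      (aeval (fun T : Finset (Fin n) => svG F n k T + 1)) = restr F U := by
    apply algHom_ext
    intro T
    rw [AlgHom.comp_apply, aeval_X, map_add, map_one, aeval_chi_svG, restr_X]
    by_cases hT : T ∈ U
    · rw [if_pos hT, if_pos hT]; ring
    · rw [if_neg hT, if_neg hT]; ring
  intro h0
  apply h
  rw [← hcomp, AlgHom.comp_apply, h0, map_zero]

end FactB

/-- the shifted succinct SV generator with parameter `k = ⌊log₂ s⌋` hits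
every nonzero `s`-sparse polynomial on `N = 2^n` variables. -/
theorem stmt11 (F : Type*) [Field F] (n s : ℕ)
    (P : MvPolynomial (Finset (Fin n)) F) (hP : P ≠ 0) (hs : P.support.card ≤ s) :
    MvPolynomial.aeval (fun T : Finset (Fin n) => svG F n (Nat.log 2 s) T + 1) P ≠ 0 := by
  classical
  obtain ⟨U, hUc, hU⟩ := lemmaA s P hP hs
  exact factB U hUc P hU
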